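/- Let $X_t = \exp((r - \sigma^2/2)t + \sigma W_t)\xi$ be the geometric Brownian motion with initial value $\xi > 0$, drift $r$, and volatility $\sigma > 0$ driven by a standard Brownian motion $W$. Then for every strike $K > 0$, the discounted expected payoff of a European call satisfies $\mathbb{E}[e^{-rT}\max\{X_T - K, 0\}] = \xi\,\mathfrak{N}\big(\frac{(r+\sigma^2/2)T + \ln(\xi/K)}{\sigma\sqrt{T}}\big) - K e^{-rT}\,\mathfrak{N}\big(\frac{(r-\sigma^2/2)T + \ln(\xi/K)}{\sigma\sqrt{T}}\big)$, where $\mathfrak{N}(x) = \int_{-\infty}^x \frac{1}{\sqrt{2\pi}} e^{-y^2/2}\,dy$ is the standard normal CDF. -/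

import Mathlib

open MeasureTheory ProbabilityTheory
open scoped ENNReal NNReal

/-- The standard normal cumulative distribution function
`𝔑(x) = ∫_{-∞}^x (2π)^{-1/2} exp(-y²/2) dy`. -/
noncomputable def stdNormalCDF (x : ℝ) : ℝ :=
  ∫ y in Set.Iic x, (Real.sqrt (2 * Real.pi))⁻¹ * Real.exp (-(y ^ 2) / 2)

noncomputable def stdNormalPDF (z : ℝ) : ℝ :=
  (Real.sqrt (2 * Real.pi))⁻¹ * Real.exp (-(z ^ 2) / 2)

lemma stdNormalCDF_eq (x : ℝ) : stdNormalCDF x = ∫ y in Set.Iic x, stdNormalPDF y := rfl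

lemma measurable_stdNormalPDF : Measurable stdNormalPDF := by
  unfold stdNormalPDF; fun_prop

lemma integrable_stdNormalPDF : Integrable stdNormalPDF := by
  have h : Integrable (fun x : ℝ => Real.exp (-(1/2 : ℝ) * x ^ 2)) :=
    integrable_exp_neg_mul_sq (by norm_num)
  have h2 := h.const_mul (Real.sqrt (2 * Real.pi))⁻¹
  have heq : stdNormalPDF
      = fun x => (Real.sqrt (2 * Real.pi))⁻¹ * Real.exp (-(1/2 : ℝ) * x ^ 2) := by
    funext x
    unfold stdNormalPDF
    rw [show -(x ^ 2) / 2 = -(1/2 : ℝ) * x ^ 2 from by ring]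
  rw [heq]
  exact h2

lemma stdNormalPDF_neg (z : ℝ) : stdNormalPDF (-z) = stdNormalPDF z := by
  unfold stdNormalPDF; rw [neg_pow]; norm_num

lemma setIntegral_stdNormalPDF_Ici (c : ℝ) :
    ∫ z in Set.Ici c, stdNormalPDF z = stdNormalCDF (-c) := by
  rw [stdNormalCDF_eq]
  have h := integral_comp_neg_Iic (-c) stdNormalPDF
  rw [neg_neg] at h
  rw [MeasureTheory.integral_Ici_eq_integral_Ioi, ← h]
  simp_rw [stdNormalPDF_neg]

lemma setIntegral_stdNormalPDF_shift (c a : ℝ) :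
    ∫ z in Set.Ici c, stdNormalPDF (z - a) = ∫ z in Set.Ici (c - a), stdNormalPDF z := by
  rw [← MeasureTheory.integral_indicator measurableSet_Ici,
    ← MeasureTheory.integral_indicator measurableSet_Ici]
  have hpt : ∀ z : ℝ, Set.indicator (Set.Ici c) (fun z => stdNormalPDF (z - a)) z
      = Set.indicator (Set.Ici (c - a)) stdNormalPDF (z - a) := by
    intro z
    by_cases h : c ≤ z
    · rw [Set.indicator_of_mem (Set.mem_Ici.2 h),
        Set.indicator_of_mem (Set.mem_Ici.2 (by linarith : c - a ≤ z - a))]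
    · rw [Set.indicator_of_notMem (fun hm => h (Set.mem_Ici.1 hm)),
        Set.indicator_of_notMem (fun hm => h (by have := Set.mem_Ici.1 hm; linarith))]
  simp_rw [hpt]
  exact MeasureTheory.integral_sub_right_eq_self (Set.indicator (Set.Ici (c - a)) stdNormalPDF) a

lemma exp_mul_stdNormalPDF (a z : ℝ) :
    Real.exp (a * z) * stdNormalPDF z = Real.exp (a ^ 2 / 2) * stdNormalPDF (z - a) := by
  unfold stdNormalPDF
  have h : ∀ u v : ℝ, Real.exp u * ((Real.sqrt (2 * Real.pi))⁻¹ * Real.exp v)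
      = (Real.sqrt (2 * Real.pi))⁻¹ * Real.exp (u + v) := by
    intro u v; rw [Real.exp_add]; ring
  rw [h, h]
  congr 2
  ring

lemma integrable_exp_mul_stdNormalPDF (a : ℝ) :
    Integrable (fun z => Real.exp (a * z) * stdNormalPDF z) := by
  simp_rw [exp_mul_stdNormalPDF]
  exact (integrable_stdNormalPDF.comp_sub_right a).const_mul _

lemma gaussianPDFReal_zero_one (z : ℝ) : gaussianPDFReal 0 1 z = stdNormalPDF z := by
  unfold gaussianPDFReal stdNormalPDF
  norm_num

/-- Black-Scholes formula for European call options with positive strike. -/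
theorem black_scholes_call_price {Ω : Type*} [MeasurableSpace Ω]
    (μ : Measure Ω) [IsProbabilityMeasure μ]
    (ξ T σ K : ℝ) (hξ : 0 < ξ) (hT : 0 < T) (hσ : 0 < σ) (hK : 0 < K) (r : ℝ)
    (Z : Ω → ℝ) (hZmeas : Measurable Z)
    (hZ : Measure.map Z μ = gaussianReal 0 1)
    (W X : Ω → ℝ)
    (hW : ∀ ω, W ω = Real.sqrt T * Z ω)
    (hX : ∀ ω, X ω = ξ * Real.exp ((r - σ ^ 2 / 2) * T + σ * W ω)) :
    ∫ ω, Real.exp (-r * T) * max (X ω - K) 0 ∂μ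
      = ξ * stdNormalCDF (((r + σ ^ 2 / 2) * T + Real.log (ξ / K)) / (σ * Real.sqrt T))
        - K * Real.exp (-r * T)
            * stdNormalCDF (((r - σ ^ 2 / 2) * T + Real.log (ξ / K)) / (σ * Real.sqrt T)) := by
  have hsT : 0 < Real.sqrt T := Real.sqrt_pos.2 hT
  set a := σ * Real.sqrt T with ha_def
  have ha : 0 < a := mul_pos hσ hsT
  set m := (r - σ ^ 2 / 2) * T with hm_def
  set c := (Real.log (K / ξ) - m) / a with hc_def
  have hKξ : 0 < K / ξ := div_pos hK hξ
  have hlog : Real.log (K / ξ) = - Real.log (ξ / K) := by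
    rw [← inv_div, Real.log_inv]
  have ha2 : a ^ 2 = σ ^ 2 * T := by
    rw [ha_def, mul_pow, Real.sq_sqrt hT.le]
  have hmac : m + a * c = Real.log (K / ξ) := by
    rw [hc_def]; field_simp; ring
  set f : ℝ → ℝ := fun z => Real.exp (-r * T) * max (ξ * Real.exp (m + a * z) - K) 0 with hf_def
  have hfmeas : Measurable f := by
    apply Measurable.mul measurable_const
    apply Measurable.max _ measurable_const
    fun_prop
  -- Step 1: rewrite integrand as f ∘ Z
  have step1 : ∫ ω, Real.exp (-r * T) * max (X ω - K) 0 ∂μ = ∫ ω, f (Z ω) ∂μ := by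
    apply integral_congr_ae (Filter.Eventually.of_forall fun ω => ?_)
    rw [hf_def]
    simp only
    rw [hX ω, hW ω, show σ * (Real.sqrt T * Z ω) = a * Z ω from by rw [ha_def]; ring]
  -- Step 2: change variables to the Gaussian measure
  have step2 : ∫ ω, f (Z ω) ∂μ = ∫ z, f z ∂(gaussianReal 0 1) := by
    rw [← hZ, integral_map hZmeas.aemeasurable hfmeas.aestronglyMeasurable]
  -- Step 3: write as a Lebesgue integral against the pdf
  have step3 : ∫ z, f z ∂(gaussianReal 0 1) = ∫ z, stdNormalPDF z * f z := by
    rw [gaussianReal_of_var_ne_zero 0 one_ne_zero]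
    unfold gaussianPDF
    have hmeas : Measurable fun x => (gaussianPDFReal 0 1 x).toNNReal :=
      measurable_real_toNNReal.comp (measurable_gaussianPDFReal 0 1)
    have h := integral_withDensity_eq_integral_smul (μ := (volume : Measure ℝ)) hmeas f
    rw [show (fun x => ENNReal.ofReal (gaussianPDFReal 0 1 x))
        = fun x => ((gaussianPDFReal 0 1 x).toNNReal : ℝ≥0∞) from rfl, h]
    congr 1
    ext z
    rw [NNReal.smul_def, smul_eq_mul, Real.coe_toNNReal _ (gaussianPDFReal_nonneg 0 1 z),
      gaussianPDFReal_zero_one]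
  -- Step 4: indicator form
  have hindic : ∀ z : ℝ, stdNormalPDF z * f z
      = Set.indicator (Set.Ici c)
          (fun z => Real.exp (-r * T) * ((ξ * Real.exp (m + a * z) - K) * stdNormalPDF z)) z := by
    intro z
    rw [Set.indicator_apply]
    split_ifs with h
    · replace h : c ≤ z := h
      have hge : K ≤ ξ * Real.exp (m + a * z) := by
        have h1 : Real.log (K / ξ) ≤ m + a * z := by
          rw [← hmac]; nlinarith
        have h2 : K / ξ ≤ Real.exp (m + a * z) := by
          calc K / ξ = Real.exp (Real.log (K / ξ)) := (Real.exp_log hKξ).symm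
          _ ≤ _ := Real.exp_le_exp.2 h1
        calc K = ξ * (K / ξ) := by field_simp
        _ ≤ ξ * Real.exp (m + a * z) := by nlinarith
      rw [hf_def]
      simp only
      rw [max_eq_left (by linarith)]
      ring
    · replace h : ¬ c ≤ z := h
      push_neg at h
      have hlt : ξ * Real.exp (m + a * z) < K := by
        have h1 : m + a * z < Real.log (K / ξ) := by
          rw [← hmac]; nlinarith
        have h2 : Real.exp (m + a * z) < K / ξ := by
          calc Real.exp (m + a * z) < Real.exp (Real.log (K / ξ)) := Real.exp_lt_exp.2 h1
          _ = K / ξ := Real.exp_log hKξ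
        calc ξ * Real.exp (m + a * z) < ξ * (K / ξ) := by nlinarith
        _ = K := by field_simp
      rw [hf_def]
      simp only
      rw [max_eq_right (by linarith)]
      ring
  have step4 : ∫ z, stdNormalPDF z * f z
      = ∫ z in Set.Ici c, Real.exp (-r * T) * ((ξ * Real.exp (m + a * z) - K) * stdNormalPDF z) := by
    simp_rw [hindic]
    exact MeasureTheory.integral_indicator measurableSet_Ici
  -- Step 5: split the integral
  have hInt1 : IntegrableOn (fun z => ξ * Real.exp m * (Real.exp (a * z) * stdNormalPDF z))
      (Set.Ici c) := ((integrable_exp_mul_stdNormalPDF a).const_mul _).integrableOn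
  have hInt2 : IntegrableOn (fun z => K * stdNormalPDF z) (Set.Ici c) :=
    (integrable_stdNormalPDF.const_mul K).integrableOn
  have step5 : ∫ z in Set.Ici c, Real.exp (-r * T) * ((ξ * Real.exp (m + a * z) - K) * stdNormalPDF z)
      = Real.exp (-r * T) * (ξ * Real.exp m * ∫ z in Set.Ici c, Real.exp (a * z) * stdNormalPDF z)
        - Real.exp (-r * T) * (K * ∫ z in Set.Ici c, stdNormalPDF z) := by
    rw [MeasureTheory.integral_const_mul]
    have hsplit : ∀ z : ℝ, (ξ * Real.exp (m + a * z) - K) * stdNormalPDF z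
        = ξ * Real.exp m * (Real.exp (a * z) * stdNormalPDF z) - K * stdNormalPDF z := by
      intro z; rw [Real.exp_add]; ring
    simp_rw [hsplit]
    rw [MeasureTheory.integral_sub hInt1 hInt2, MeasureTheory.integral_const_mul,
      MeasureTheory.integral_const_mul]
    ring
  -- Step 6: evaluate the two Gaussian integrals
  have step6a : ∫ z in Set.Ici c, Real.exp (a * z) * stdNormalPDF z
      = Real.exp (a ^ 2 / 2) * stdNormalCDF (a - c) := by
    simp_rw [exp_mul_stdNormalPDF]
    rw [MeasureTheory.integral_const_mul, setIntegral_stdNormalPDF_shift,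
      setIntegral_stdNormalPDF_Ici, neg_sub]
  have step6b : ∫ z in Set.Ici c, stdNormalPDF z = stdNormalCDF (-c) :=
    setIntegral_stdNormalPDF_Ici c
  -- Step 7: arithmetic
  have hd1 : a - c = ((r + σ ^ 2 / 2) * T + Real.log (ξ / K)) / a := by
    rw [hc_def, hlog, hm_def]
    field_simp
    nlinarith [ha2]
  have hd2 : -c = (m + Real.log (ξ / K)) / a := by
    rw [hc_def, hlog]; ring
  have hξe : Real.exp (-r * T) * (ξ * Real.exp m * Real.exp (a ^ 2 / 2)) = ξ := by
    have h0 : -r * T + a ^ 2 / 2 + m = 0 := by rw [ha2, hm_def]; ring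
    calc Real.exp (-r * T) * (ξ * Real.exp m * Real.exp (a ^ 2 / 2))
        = ξ * Real.exp (-r * T + a ^ 2 / 2 + m) := by
          rw [Real.exp_add, Real.exp_add]; ring
      _ = ξ := by rw [h0, Real.exp_zero, mul_one]
  rw [step1, step2, step3, step4, step5, step6a, step6b, hd1, hd2]
  linear_combination stdNormalCDF (((r + σ ^ 2 / 2) * T + Real.log (ξ / K)) / a) * hξe
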